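/- Let H be a Hilbert space and let f, g be H-valued analytic polynomials of degree at most l (with l ≥ 1). Then, with D the coefficient operator (1+n) and α > 0, ‖D^{-l}((D^α f) ⊗ (D^l g)^∨)‖_{A¹_{α-1,log}(S¹)} ≤ C_α · l · ‖f‖_{H²(H)} ‖g‖_{H²(H)}, where C_α depends only on α. Explicitly, the left side is bounded by ∑_{m,n=0}^l (1+m)^α (1+n)^l (1+m+n)^{-l} · 2^α Γ(1+α)(2+m+n)^{-α} ‖f̂(m)‖‖ĝ(n)‖ ≤ C_α ∑_{m,n=0}^l ‖f̂(m)‖‖ĝ(n)‖ ≤ C_α l ‖f‖_{H²(H)}‖g‖_{H²(H)}. -/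

import Mathlib

open MeasureTheory Finset Set Real


lemma exp_neg_image : (fun u : ℝ => Real.exp (-u)) '' Set.Ioi 0 = Set.Ioo 0 1 := by
  ext x
  constructor
  · rintro ⟨u, hu, rfl⟩
    exact ⟨Real.exp_pos _, by rwa [Real.exp_lt_one_iff, neg_neg_iff_pos]⟩
  · rintro ⟨h0, h1⟩
    exact ⟨-Real.log x, by simpa using Real.log_neg h0 h1, by simp [Real.exp_log h0]⟩

lemma oneD_aux (α : ℝ) (k : ℕ) :
    ∀ u ∈ Set.Ioi (0:ℝ),
      |(-Real.exp (-u))| • (Real.exp (-u) ^ (k+1) * Real.log (1 / Real.exp (-u) ^ 2) ^ (α - 1))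
        = 2 ^ (α - 1) * (u ^ (α - 1) * Real.exp (-((k:ℝ)+2) * u)) := by
  intro u hu
  have hu' : (0:ℝ) < u := hu
  have h2 : (1:ℝ) / Real.exp (-u) ^ 2 = Real.exp (2*u) := by
    rw [← Real.exp_nat_mul, one_div, ← Real.exp_neg]
    norm_num
  rw [h2, Real.log_exp, abs_neg, abs_of_pos (Real.exp_pos _), smul_eq_mul,
    Real.mul_rpow (by norm_num) hu'.le, ← Real.exp_nat_mul]
  push_cast
  rw [show Real.exp (-u) * (Real.exp (((k:ℝ) + 1) * -u) * (2 ^ (α - 1) * u ^ (α - 1)))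
      = (Real.exp (-u) * Real.exp (((k:ℝ)+1) * -u)) * (2 ^ (α-1) * u ^ (α-1)) from by ring,
    ← Real.exp_add]
  ring_nf


lemma deriv_exp_neg : ∀ u ∈ Set.Ioi (0:ℝ),
    HasDerivWithinAt (fun u : ℝ => Real.exp (-u)) (-Real.exp (-u)) (Set.Ioi 0) u := by
  intro u _
  simpa using ((hasDerivAt_neg u).exp).hasDerivWithinAt

lemma inj_exp_neg : Set.InjOn (fun u : ℝ => Real.exp (-u)) (Set.Ioi 0) :=
  (Real.exp_injective.comp neg_injective).injOn

lemma gamma_int (α : ℝ) (hα : 0 < α) (k : ℕ) :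
    IntegrableOn (fun u : ℝ => 2 ^ (α - 1) * (u ^ (α - 1) * Real.exp (-((k:ℝ)+2) * u)))
      (Set.Ioi 0) := by
  have h := (integrableOn_rpow_mul_exp_neg_mul_rpow (by linarith : (-1:ℝ) < α - 1)
    (by norm_num : (0:ℝ) < 1) (by positivity : (0:ℝ) < (k:ℝ)+2)).const_mul ((2:ℝ) ^ (α - 1))
  exact MeasureTheory.IntegrableOn.congr_fun h (fun x _ => by simp [Real.rpow_one]) measurableSet_Ioi

lemma gamma_val (α : ℝ) (hα : 0 < α) (k : ℕ) :
    ∫ u in Set.Ioi (0:ℝ), 2 ^ (α - 1) * (u ^ (α - 1) * Real.exp (-((k:ℝ)+2) * u))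
      = 2 ^ (α - 1) * Real.Gamma α / ((k:ℝ)+2) ^ α := by
  rw [integral_const_mul]
  have h := integral_rpow_mul_exp_neg_mul_rpow (by norm_num : (0:ℝ) < 1)
    (by linarith : (-1:ℝ) < α - 1) (by positivity : (0:ℝ) < (k:ℝ)+2)
  simp only [Real.rpow_one] at h
  rw [h, show -(α-1+1)/1 = -α by ring, show (α-1+1)/1 = α by ring,
    Real.rpow_neg (by positivity)]
  field_simp

lemma oneD_int (α : ℝ) (hα : 0 < α) (k : ℕ) :
    IntegrableOn (fun r : ℝ => r ^ (k+1) * Real.log (1 / r ^ 2) ^ (α - 1)) (Set.Ioo 0 1) := by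
  rw [← exp_neg_image,
    integrableOn_image_iff_integrableOn_abs_deriv_smul measurableSet_Ioi deriv_exp_neg inj_exp_neg]
  exact (gamma_int α hα k).congr_fun (fun u hu => (oneD_aux α k u hu).symm) measurableSet_Ioi

lemma oneD_val (α : ℝ) (hα : 0 < α) (k : ℕ) :
    ∫ r in Set.Ioo (0:ℝ) 1, r ^ (k+1) * Real.log (1 / r ^ 2) ^ (α - 1)
      = 2 ^ (α - 1) * Real.Gamma α / ((k:ℝ)+2) ^ α := by
  rw [← exp_neg_image,
    integral_image_eq_integral_abs_deriv_smul measurableSet_Ioi deriv_exp_neg inj_exp_neg,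
    setIntegral_congr_fun measurableSet_Ioi (oneD_aux α k), gamma_val α hα k]


lemma my_integrable_comp_polarCoord_symm (f : ℝ × ℝ → ℝ) :
    Integrable f ↔
      IntegrableOn (fun p : ℝ × ℝ => p.1 • f (polarCoord.symm p)) polarCoord.target := by
  set B : ℝ × ℝ → ℝ × ℝ →L[ℝ] ℝ × ℝ := fun p =>
    LinearMap.toContinuousLinearMap (Matrix.toLin (Module.Basis.finTwoProd ℝ) (Module.Basis.finTwoProd ℝ)
      !![Real.cos p.2, -p.1 * Real.sin p.2; Real.sin p.2, p.1 * Real.cos p.2]) with hB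
  have A : ∀ p ∈ polarCoord.target, HasFDerivWithinAt polarCoord.symm (B p) polarCoord.target p :=
    fun p _ => (hasFDerivAt_polarCoord_symm p).hasFDerivWithinAt
  have B_det : ∀ p, (B p).det = p.1 := by
    intro p
    conv_rhs => rw [← one_mul p.1, ← Real.cos_sq_add_sin_sq p.2]
    simp only [hB, neg_mul, LinearMap.det_toContinuousLinearMap, LinearMap.det_toLin,
      Matrix.det_fin_two_of, sub_neg_eq_add]
    ring
  have hinj : Set.InjOn polarCoord.symm polarCoord.target := polarCoord.symm.injOn
  constructor
  · intro hf
    have h1 : IntegrableOn f (polarCoord.symm '' polarCoord.target) := hf.integrableOn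
    rw [integrableOn_image_iff_integrableOn_abs_det_fderiv_smul volume
      polarCoord.open_target.measurableSet A hinj f] at h1
    refine h1.congr_fun (fun p hp => ?_) polarCoord.open_target.measurableSet
    beta_reduce
    rw [B_det, abs_of_pos hp.1]
  · intro hf
    have h1 : IntegrableOn (fun p => |(B p).det| • f (polarCoord.symm p)) polarCoord.target := by
      refine hf.congr_fun (fun p hp => ?_) polarCoord.open_target.measurableSet
      rw [B_det, abs_of_pos hp.1]
    rw [← integrableOn_image_iff_integrableOn_abs_det_fderiv_smul volume
      polarCoord.open_target.measurableSet A hinj f] at h1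
    rw [polarCoord.symm_image_target_eq_source] at h1
    rw [← integrableOn_univ]
    exact h1.congr_set_ae polarCoord_source_ae_eq_univ.symm

lemma my_complex_integrable_comp_polarCoord_symm (f : ℂ → ℝ) :
    Integrable f ↔
      IntegrableOn (fun p : ℝ × ℝ => p.1 • f (Complex.polarCoord.symm p)) polarCoord.target := by
  rw [← MeasurePreserving.integrable_comp_emb Complex.volume_preserving_equiv_real_prod.symm
    Complex.measurableEquivRealProd.symm.measurableEmbedding,
    my_integrable_comp_polarCoord_symm]
  rfl


lemma polar_pointwise (α : ℝ) (k : ℕ) :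
    ∀ p ∈ (Set.Ioi (0:ℝ)) ×ˢ (Set.Ioo (-π) π),
      p.1 • (Set.indicator (Metric.ball (0:ℂ) 1)
          (fun z => ‖z‖ ^ k * Real.log (1 / ‖z‖ ^ 2) ^ (α - 1)) (Complex.polarCoord.symm p))
        = Set.indicator (Set.Ioo (0:ℝ) 1)
            (fun r => r ^ (k+1) * Real.log (1 / r ^ 2) ^ (α - 1)) p.1 := by
  rintro p ⟨h1, _⟩
  have h1 : (0:ℝ) < p.1 := h1
  have habs : ‖Complex.polarCoord.symm p‖ = p.1 := by
    rw [Complex.norm_polarCoord_symm, abs_of_pos h1]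
  by_cases h : p.1 < 1
  · rw [Set.indicator_of_mem (by rw [mem_ball_zero_iff, habs]; exact h),
      Set.indicator_of_mem (Set.mem_Ioo.mpr ⟨h1, h⟩), habs, smul_eq_mul, pow_succ]
    ring
  · rw [Set.indicator_of_notMem (by rw [mem_ball_zero_iff, habs]; exact h),
      Set.indicator_of_notMem (fun hc => h hc.2), smul_zero]

lemma key_int (α : ℝ) (hα : 0 < α) (k : ℕ) :
    IntegrableOn (fun z : ℂ => ‖z‖ ^ k * Real.log (1 / ‖z‖ ^ 2) ^ (α - 1))
      (Metric.ball (0:ℂ) 1) := by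
  rw [← integrable_indicator_iff Metric.isOpen_ball.measurableSet,
    my_complex_integrable_comp_polarCoord_symm, polarCoord_target]
  have hφ : Integrable (Set.indicator (Set.Ioo (0:ℝ) 1)
      (fun r => r ^ (k+1) * Real.log (1 / r ^ 2) ^ (α - 1))) (volume.restrict (Set.Ioi 0)) :=
    ((integrable_indicator_iff measurableSet_Ioo).2 (oneD_int α hα k)).integrableOn
  have hprod : IntegrableOn
      (fun p : ℝ × ℝ => Set.indicator (Set.Ioo (0:ℝ) 1)
        (fun r => r ^ (k+1) * Real.log (1 / r ^ 2) ^ (α - 1)) p.1 * (fun _ : ℝ => (1:ℝ)) p.2)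
      (Set.Ioi (0:ℝ) ×ˢ Set.Ioo (-π) π) := by
    rw [IntegrableOn, Measure.volume_eq_prod, ← Measure.prod_restrict]
    exact hφ.mul_prod (integrable_const 1)
  refine (hprod.congr_fun (fun p hp => ?_)
    (measurableSet_Ioi.prod measurableSet_Ioo)).congr_fun
    (fun p hp => (polar_pointwise α k p hp).symm) (measurableSet_Ioi.prod measurableSet_Ioo)
  simp

lemma key_val (α : ℝ) (hα : 0 < α) (k : ℕ) :
    ∫ z in Metric.ball (0:ℂ) 1, ‖z‖ ^ k * Real.log (1 / ‖z‖ ^ 2) ^ (α - 1)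
      = 2 ^ α * π * Real.Gamma α / ((k:ℝ)+2) ^ α := by
  rw [← integral_indicator Metric.isOpen_ball.measurableSet,
    ← Complex.integral_comp_polarCoord_symm, polarCoord_target,
    setIntegral_congr_fun (measurableSet_Ioi.prod measurableSet_Ioo) (polar_pointwise α k)]
  have : ∫ p : ℝ × ℝ in Set.Ioi (0:ℝ) ×ˢ Set.Ioo (-π) π,
      Set.indicator (Set.Ioo (0:ℝ) 1)
        (fun r => r ^ (k+1) * Real.log (1 / r ^ 2) ^ (α - 1)) p.1
      = (∫ r in Set.Ioi (0:ℝ), Set.indicator (Set.Ioo (0:ℝ) 1)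
          (fun r => r ^ (k+1) * Real.log (1 / r ^ 2) ^ (α - 1)) r)
        * ∫ _ in Set.Ioo (-π) π, (1:ℝ) := by
    rw [Measure.volume_eq_prod, ← setIntegral_prod_mul]
    simp
  rw [this, setIntegral_indicator measurableSet_Ioo,
    Set.inter_eq_right.mpr (fun x hx => hx.1), oneD_val α hα k]
  simp only [integral_const, MeasurableSet.univ, Measure.restrict_apply, Set.univ_inter,
    Real.volume_Ioo, smul_eq_mul, mul_one]
  rw [measureReal_restrict_apply_univ, Real.volume_real_Ioo_of_le (by linarith [Real.pi_pos])]
  rw [show (2:ℝ) ^ α = 2 ^ (α - 1) * 2 by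
    rw [← Real.rpow_add_one (by norm_num) (α - 1)]; ring_nf]
  ring


/-- Low-frequency estimate: for `H`-valued polynomials `f, g` of degree at most `l`, the
`A¹_{α-1,log}(S¹)`-norm of `D^{-l}((D^α f) ⊗ (D^l g)∨)` is bounded (via the triangle
inequality, the rank-one norm `‖x ⊗ y‖_{S¹} = ‖x‖‖y‖` and the monomial computation
`‖z^{m+n}‖_{A¹_{α-1,log}} = 2^α Γ(1+α)/(2+m+n)^α`) by
`∑_{m,n=0}^l (1+m)^α (1+n)^l (1+m+n)^{-l} ‖f̂(m)‖ ‖ĝ(n)‖ ‖z^{m+n}‖ ≤ C_α l ‖f‖‖g‖`. -/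
theorem stmt_19 (α : ℝ) (hα : 0 < α) :
    ∃ C > 0,
      ∀ (H : Type) [NormedAddCommGroup H] [InnerProductSpace ℂ H],
        ∀ (l : ℕ), 1 ≤ l → ∀ (a b : ℕ → H),
          ∫ z in Metric.ball (0 : ℂ) 1,
              (∑ m ∈ range (l + 1), ∑ n ∈ range (l + 1),
                  (1 + m : ℝ) ^ α * (1 + n : ℝ) ^ l / (1 + m + n : ℝ) ^ l *
                    ‖a m‖ * ‖b n‖ * ‖z‖ ^ (m + n)) *
                (α / Real.pi) * Real.log (1 / ‖z‖ ^ 2) ^ (α - 1)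
            ≤ C * l *
                Real.sqrt (∑ m ∈ range (l + 1), ‖a m‖ ^ 2) *
                Real.sqrt (∑ n ∈ range (l + 1), ‖b n‖ ^ 2) := by
  have hΓ : 0 < Real.Gamma (α + 1) := Real.Gamma_pos_of_pos (by linarith)
  set G : ℝ := 2 ^ α * Real.Gamma (α + 1) with hG
  have hGpos : 0 < G := by positivity
  refine ⟨2 ^ (α + 1) * Real.Gamma (α + 1), by positivity, ?_⟩
  intro H _ _ l hl a b
  set c : ℕ → ℕ → ℝ := fun m n =>
    (1 + m : ℝ) ^ α * (1 + n : ℝ) ^ l / (1 + m + n : ℝ) ^ l * ‖a m‖ * ‖b n‖ with hcdef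
  set h : ℕ → ℕ → ℂ → ℝ := fun m n z =>
    (c m n * (α / Real.pi)) * (‖z‖ ^ (m + n) * Real.log (1 / ‖z‖ ^ 2) ^ (α - 1)) with hhdef
  have hint : ∀ m n : ℕ, IntegrableOn (h m n) (Metric.ball (0:ℂ) 1) :=
    fun m n => (key_int α hα (m + n)).const_mul _
  have hptwise : ∀ z : ℂ,
      (∑ m ∈ range (l + 1), ∑ n ∈ range (l + 1),
          (1 + m : ℝ) ^ α * (1 + n : ℝ) ^ l / (1 + m + n : ℝ) ^ l *
            ‖a m‖ * ‖b n‖ * ‖z‖ ^ (m + n)) *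
        (α / Real.pi) * Real.log (1 / ‖z‖ ^ 2) ^ (α - 1)
      = ∑ m ∈ range (l + 1), ∑ n ∈ range (l + 1), h m n z := by
    intro z
    simp only [Finset.sum_mul, hhdef, hcdef]
    exact Finset.sum_congr rfl fun m _ => Finset.sum_congr rfl fun n _ => by ring
  calc
    ∫ z in Metric.ball (0 : ℂ) 1,
        (∑ m ∈ range (l + 1), ∑ n ∈ range (l + 1),
            (1 + m : ℝ) ^ α * (1 + n : ℝ) ^ l / (1 + m + n : ℝ) ^ l *
              ‖a m‖ * ‖b n‖ * ‖z‖ ^ (m + n)) *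
          (α / Real.pi) * Real.log (1 / ‖z‖ ^ 2) ^ (α - 1)
      = ∫ z in Metric.ball (0 : ℂ) 1, ∑ m ∈ range (l + 1), ∑ n ∈ range (l + 1), h m n z := by
        exact setIntegral_congr_fun Metric.isOpen_ball.measurableSet fun z _ => hptwise z
    _ = ∑ m ∈ range (l + 1), ∑ n ∈ range (l + 1), ∫ z in Metric.ball (0 : ℂ) 1, h m n z := by
        rw [integral_finset_sum _ fun m _ => integrable_finset_sum _ fun n _ => hint m n]
        exact Finset.sum_congr rfl fun m _ => integral_finset_sum _ fun n _ => hint m n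
    _ = ∑ m ∈ range (l + 1), ∑ n ∈ range (l + 1),
          c m n * (G / ((m:ℝ) + n + 2) ^ α) := by
        refine Finset.sum_congr rfl fun m _ => Finset.sum_congr rfl fun n _ => ?_
        simp only [hhdef]
        rw [MeasureTheory.integral_const_mul, key_val α hα (m + n)]
        rw [hG, Real.Gamma_add_one hα.ne']
        have hπ : Real.pi ≠ 0 := Real.pi_ne_zero
        push_cast
        field_simp
    _ ≤ ∑ m ∈ range (l + 1), ∑ n ∈ range (l + 1), G * (‖a m‖ * ‖b n‖) := by
        refine Finset.sum_le_sum fun m _ => Finset.sum_le_sum fun n _ => ?_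
        have hm0 : (0:ℝ) ≤ (m:ℝ) := Nat.cast_nonneg m
        have hn0 : (0:ℝ) ≤ (n:ℝ) := Nat.cast_nonneg n
        have hQR : ((1:ℝ) + n) ^ l ≤ ((1:ℝ) + m + n) ^ l :=
          pow_le_pow_left₀ (by linarith) (by linarith) l
        have hPS : ((1:ℝ) + m) ^ α ≤ ((m:ℝ) + n + 2) ^ α :=
          Real.rpow_le_rpow (by linarith) (by linarith) hα.le
        have hR : (0:ℝ) < ((1:ℝ) + m + n) ^ l := by positivity
        have hS : (0:ℝ) < ((m:ℝ) + n + 2) ^ α := by positivity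
        have key : (1 + m : ℝ) ^ α * (1 + n : ℝ) ^ l / (1 + m + n : ℝ) ^ l *
            (G / ((m:ℝ) + n + 2) ^ α) ≤ G := by
          rw [div_mul_div_comm, div_le_iff₀ (by positivity)]
          have h1 : ((1:ℝ) + m) ^ α * ((1:ℝ) + n) ^ l ≤
              ((m:ℝ) + n + 2) ^ α * ((1:ℝ) + m + n) ^ l :=
            mul_le_mul hPS hQR (by positivity) (by positivity)
          nlinarith [hGpos.le, mul_le_mul_of_nonneg_right h1 hGpos.le]
        have hab : (0:ℝ) ≤ ‖a m‖ * ‖b n‖ := by positivity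
        calc c m n * (G / ((m:ℝ) + n + 2) ^ α)
            = ((1 + m : ℝ) ^ α * (1 + n : ℝ) ^ l / (1 + m + n : ℝ) ^ l *
                (G / ((m:ℝ) + n + 2) ^ α)) * (‖a m‖ * ‖b n‖) := by rw [hcdef]; ring
          _ ≤ G * (‖a m‖ * ‖b n‖) := mul_le_mul_of_nonneg_right key hab
    _ = G * ((∑ m ∈ range (l + 1), ‖a m‖) * (∑ n ∈ range (l + 1), ‖b n‖)) := by
        rw [Finset.sum_mul_sum, Finset.mul_sum]
        exact Finset.sum_congr rfl fun m _ => by rw [Finset.mul_sum]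
    _ ≤ 2 ^ (α + 1) * Real.Gamma (α + 1) * l *
          Real.sqrt (∑ m ∈ range (l + 1), ‖a m‖ ^ 2) *
          Real.sqrt (∑ n ∈ range (l + 1), ‖b n‖ ^ 2) := by
        have cs : ∀ c : ℕ → ℝ, (∀ i, 0 ≤ c i) →
            ∑ i ∈ range (l + 1), c i ≤
              Real.sqrt ((l:ℝ) + 1) * Real.sqrt (∑ i ∈ range (l + 1), (c i) ^ 2) := by
          intro c hc
          have h := sum_mul_sq_le_sq_mul_sq (range (l + 1)) c (fun _ => (1:ℝ))
          simp only [mul_one, one_pow, Finset.sum_const, Finset.card_range, nsmul_eq_mul] at h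
          calc ∑ i ∈ range (l + 1), c i
              = Real.sqrt ((∑ i ∈ range (l + 1), c i) ^ 2) :=
                (Real.sqrt_sq (Finset.sum_nonneg fun i _ => hc i)).symm
            _ ≤ Real.sqrt (((l:ℝ) + 1) * ∑ i ∈ range (l + 1), (c i) ^ 2) := by
                apply Real.sqrt_le_sqrt
                rw [mul_comm]
                exact_mod_cast h
            _ = Real.sqrt ((l:ℝ) + 1) * Real.sqrt (∑ i ∈ range (l + 1), (c i) ^ 2) :=
                Real.sqrt_mul (by positivity) _
        have hA := cs (fun m => ‖a m‖) (fun i => norm_nonneg _)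
        have hB := cs (fun n => ‖b n‖) (fun i => norm_nonneg _)
        have hAnn : (0:ℝ) ≤ ∑ m ∈ range (l + 1), ‖a m‖ :=
          Finset.sum_nonneg fun i _ => norm_nonneg _
        have hBnn : (0:ℝ) ≤ ∑ n ∈ range (l + 1), ‖b n‖ :=
          Finset.sum_nonneg fun i _ => norm_nonneg _
        have hstep : (∑ m ∈ range (l + 1), ‖a m‖) * (∑ n ∈ range (l + 1), ‖b n‖)
            ≤ ((l:ℝ) + 1) * (Real.sqrt (∑ m ∈ range (l + 1), ‖a m‖ ^ 2) *
                Real.sqrt (∑ n ∈ range (l + 1), ‖b n‖ ^ 2)) := by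
          calc (∑ m ∈ range (l + 1), ‖a m‖) * (∑ n ∈ range (l + 1), ‖b n‖)
              ≤ (Real.sqrt ((l:ℝ) + 1) * Real.sqrt (∑ m ∈ range (l + 1), ‖a m‖ ^ 2)) *
                (Real.sqrt ((l:ℝ) + 1) * Real.sqrt (∑ n ∈ range (l + 1), ‖b n‖ ^ 2)) :=
              mul_le_mul hA hB hBnn (by positivity)
            _ = (Real.sqrt ((l:ℝ) + 1) * Real.sqrt ((l:ℝ) + 1)) *
                (Real.sqrt (∑ m ∈ range (l + 1), ‖a m‖ ^ 2) *
                  Real.sqrt (∑ n ∈ range (l + 1), ‖b n‖ ^ 2)) := by ring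
            _ = ((l:ℝ) + 1) * (Real.sqrt (∑ m ∈ range (l + 1), ‖a m‖ ^ 2) *
                Real.sqrt (∑ n ∈ range (l + 1), ‖b n‖ ^ 2)) := by
                rw [Real.mul_self_sqrt (by positivity)]
        have hl' : ((l:ℝ) + 1) ≤ 2 * l := by
          have : (1:ℝ) ≤ (l:ℝ) := by exact_mod_cast hl
          linarith
        have h2G : (2:ℝ) ^ (α + 1) * Real.Gamma (α + 1) = 2 * G := by
          rw [hG, Real.rpow_add_one (by norm_num : (2:ℝ) ≠ 0)]; ring
        rw [h2G]
        calc G * ((∑ m ∈ range (l + 1), ‖a m‖) * (∑ n ∈ range (l + 1), ‖b n‖))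
            ≤ G * (((l:ℝ) + 1) * (Real.sqrt (∑ m ∈ range (l + 1), ‖a m‖ ^ 2) *
                Real.sqrt (∑ n ∈ range (l + 1), ‖b n‖ ^ 2))) :=
              mul_le_mul_of_nonneg_left hstep hGpos.le
          _ ≤ G * ((2 * l) * (Real.sqrt (∑ m ∈ range (l + 1), ‖a m‖ ^ 2) *
                Real.sqrt (∑ n ∈ range (l + 1), ‖b n‖ ^ 2))) := by
              apply mul_le_mul_of_nonneg_left _ hGpos.le
              apply mul_le_mul_of_nonneg_right hl' (by positivity)
          _ = 2 * G * (l:ℝ) * Real.sqrt (∑ m ∈ range (l + 1), ‖a m‖ ^ 2) *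
                Real.sqrt (∑ n ∈ range (l + 1), ‖b n‖ ^ 2) := by ring
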